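/- (Succinct structure of the GLS covariance) Suppose W = [[W1 ⊗ I_d],[W2 ⊗ 𝟙ᵀ]] and Σ = diag(Σ1 ⊗ I_d, Σ2), where W1 ∈ ℝ^{m1×k}, W2 ∈ ℝ^{m2×k}, Σ1 ∈ ℝ^{m1×m1} and Σ2 ∈ ℝ^{m2×m2} are positive definite, and W1 has full column rank. Then (WᵀΣ⁻¹W)⁻¹ = A ⊗ P0 + B ⊗ P1, where A = (W1ᵀΣ1⁻¹W1)⁻¹, B = (W1ᵀΣ1⁻¹W1 + d·W2ᵀΣ2⁻¹W2)⁻¹, P0 = I_d − (1/d)J_d, P1 = (1/d)J_d. -/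

import Mathlib

open Matrix
open scoped Kronecker

/-- The d×d all-ones matrix. -/
noncomputable def Jmat (d : ℕ) : Matrix (Fin d) (Fin d) ℝ := Matrix.of fun _ _ => 1

/-- P0 = I - (1/d)·J. -/
noncomputable def P0 (d : ℕ) : Matrix (Fin d) (Fin d) ℝ := 1 - ((d : ℝ)⁻¹) • Jmat d

/-- P1 = (1/d)·J. -/
noncomputable def P1 (d : ℕ) : Matrix (Fin d) (Fin d) ℝ := ((d : ℝ)⁻¹) • Jmat d

lemma Jmat_mul_Jmat (d : ℕ) : Jmat d * Jmat d = (d : ℝ) • Jmat d := by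
  ext i j
  simp [Jmat, Matrix.mul_apply]

lemma Jmat_mul_P1 (d : ℕ) (hd : 0 < d) : Jmat d * P1 d = Jmat d := by
  rw [P1, Matrix.mul_smul, Jmat_mul_Jmat, smul_smul,
    inv_mul_cancel₀ (by exact_mod_cast hd.ne' : (d:ℝ) ≠ 0), one_smul]

lemma Jmat_mul_P0 (d : ℕ) (hd : 0 < d) : Jmat d * P0 d = 0 := by
  rw [P0, Matrix.mul_sub, Matrix.mul_one,
    show ((d:ℝ)⁻¹ • Jmat d) = P1 d from rfl, Jmat_mul_P1 d hd, sub_self]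

lemma P0_add_P1 (d : ℕ) : P0 d + P1 d = 1 := by
  rw [P0, P1, sub_add_cancel]

theorem stmt_18 (d m1 m2 k : ℕ) (hd : 0 < d)
    (W1 : Matrix (Fin m1) (Fin k) ℝ) (W2 : Matrix (Fin m2) (Fin k) ℝ)
    (hW1 : W1.rank = k)
    (S1 : Matrix (Fin m1) (Fin m1) ℝ) (hS1 : S1.PosDef)
    (S2 : Matrix (Fin m2) (Fin m2) ℝ) (hS2 : S2.PosDef)
    (W : Matrix ((Fin m1 × Fin d) ⊕ Fin m2) (Fin k × Fin d) ℝ)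
    (hWtop : ∀ p q, W (Sum.inl p) q = (W1 ⊗ₖ (1 : Matrix (Fin d) (Fin d) ℝ)) p q)
    (hWbot : ∀ i q, W (Sum.inr i) q = W2 i q.1)
    (S : Matrix ((Fin m1 × Fin d) ⊕ Fin m2) ((Fin m1 × Fin d) ⊕ Fin m2) ℝ)
    (hS : S = fromBlocks (S1 ⊗ₖ (1 : Matrix (Fin d) (Fin d) ℝ)) 0 0 S2)
    (A B : Matrix (Fin k) (Fin k) ℝ)
    (hA : A = (W1ᵀ * S1⁻¹ * W1)⁻¹)
    (hB : B = (W1ᵀ * S1⁻¹ * W1 + (d : ℝ) • (W2ᵀ * S2⁻¹ * W2))⁻¹) :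
    (Wᵀ * S⁻¹ * W)⁻¹ = A ⊗ₖ P0 d + B ⊗ₖ P1 d := by
  classical
  set C1 := W1ᵀ * S1⁻¹ * W1 with hC1def
  set C2 := W2ᵀ * S2⁻¹ * W2 with hC2def
  -- injectivity of W1 *ᵥ ·
  have hker : ∀ x : Fin k → ℝ, W1 *ᵥ x = 0 → x = 0 := by
    rw [← Matrix.ker_mulVecLin_eq_bot_iff, Submodule.eq_bot_iff]
    intro x hx
    have h2 := LinearMap.finrank_range_add_finrank_ker W1.mulVecLin
    rw [show Module.finrank ℝ (LinearMap.range W1.mulVecLin) = k from hW1,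
      Module.finrank_pi, Fintype.card_fin] at h2
    have hk0 : Module.finrank ℝ (LinearMap.ker W1.mulVecLin) = 0 := by omega
    have hbot := Submodule.finrank_eq_zero.mp hk0
    rw [hbot] at hx
    exact hx
  have hS1inv : S1⁻¹.PosDef := hS1.inv
  have hS2inv : S2⁻¹.PosDef := hS2.inv
  -- C1 is positive definite
  have hC1 : C1.PosDef := by
    rw [posDef_iff_dotProduct_mulVec]
    refine ⟨?_, ?_⟩
    · have := isHermitian_conjTranspose_mul_mul W1 hS1inv.1
      simpa [conjTranspose_eq_transpose_of_trivial] using this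
    · intro x hx
      have hWx : W1 *ᵥ x ≠ 0 := fun h => hx (hker x h)
      have := hS1inv.dotProduct_mulVec_pos hWx
      simpa [hC1def, ← Matrix.mulVec_mulVec, Matrix.dotProduct_mulVec,
        Matrix.vecMul_transpose, star_trivial] using this
  -- d • C2 is positive semidefinite
  have hC2 : C2.PosSemidef := by
    have := hS2inv.posSemidef.conjTranspose_mul_mul_same W2
    simpa [conjTranspose_eq_transpose_of_trivial] using this
  have hdC2 : ((d : ℝ) • C2).PosSemidef := by
    rw [posSemidef_iff_dotProduct_mulVec]
    refine ⟨?_, ?_⟩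
    · show ((d:ℝ) • C2)ᴴ = (d:ℝ) • C2
      rw [conjTranspose_smul]
      rw [show star ((d:ℝ)) = (d:ℝ) from rfl, hC2.1.eq]
    · intro x
      have := hC2.dotProduct_mulVec_nonneg x
      rw [Matrix.smul_mulVec, dotProduct_smul]
      positivity
  have hC12 : (C1 + (d : ℝ) • C2).PosDef := hC1.add_posSemidef hdC2
  have hdne : ((d:ℝ)) ≠ 0 := by exact_mod_cast hd.ne'
  -- inverses multiply to one
  have hC1A : C1 * A = 1 := by
    rw [hA]; exact Matrix.mul_nonsing_inv _ hC1.det_pos.ne'.isUnit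
  have hC12B : (C1 + (d : ℝ) • C2) * B = 1 := by
    rw [hB]; exact Matrix.mul_nonsing_inv _ hC12.det_pos.ne'.isUnit
  -- structure of S⁻¹
  have hS1mul : S1 * S1⁻¹ = 1 := Matrix.mul_nonsing_inv _ hS1.det_pos.ne'.isUnit
  have hS2mul : S2 * S2⁻¹ = 1 := Matrix.mul_nonsing_inv _ hS2.det_pos.ne'.isUnit
  have hSinv : S⁻¹ = fromBlocks (S1⁻¹ ⊗ₖ (1 : Matrix (Fin d) (Fin d) ℝ)) 0 0 S2⁻¹ := by
    apply Matrix.inv_eq_right_inv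
    rw [hS, Matrix.fromBlocks_multiply]
    simp [← Matrix.mul_kronecker_mul, hS1mul, hS2mul, Matrix.fromBlocks_one]
  -- decompose W
  set Wb : Matrix (Fin m2) (Fin k × Fin d) ℝ :=
    Matrix.of (fun i q => W2 i q.1) with hWbdef
  have hW' : W = fromRows (W1 ⊗ₖ (1 : Matrix (Fin d) (Fin d) ℝ)) Wb := by
    ext (p | i) q
    · rw [fromRows_apply_inl]; exact hWtop p q
    · rw [fromRows_apply_inr]; exact hWbot i q
  -- the Gram matrix
  have hbotblock : Wbᵀ * S2⁻¹ * Wb = C2 ⊗ₖ Jmat d := by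
    ext q q'
    simp only [Matrix.mul_apply, Matrix.transpose_apply, hWbdef, Matrix.of_apply,
      Matrix.kroneckerMap_apply, Jmat, hC2def, mul_one]
  have hM : Wᵀ * S⁻¹ * W = C1 ⊗ₖ (1 : Matrix (Fin d) (Fin d) ℝ) + C2 ⊗ₖ Jmat d := by
    rw [hW', hSinv, transpose_fromRows, fromCols_mul_fromBlocks,
      Matrix.mul_zero, Matrix.mul_zero, add_zero, zero_add, fromCols_mul_fromRows]
    rw [hbotblock, show (W1 ⊗ₖ (1 : Matrix (Fin d) (Fin d) ℝ))ᵀ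
          = W1ᵀ ⊗ₖ (1 : Matrix (Fin d) (Fin d) ℝ) by
        rw [← Matrix.kroneckerMap_transpose, Matrix.transpose_one]]
    simp only [← Matrix.mul_kronecker_mul, Matrix.one_mul]
    rfl
  -- final computation
  rw [hM]
  apply Matrix.inv_eq_right_inv
  rw [Matrix.add_mul, Matrix.mul_add, Matrix.mul_add]
  simp only [← Matrix.mul_kronecker_mul]
  rw [Jmat_mul_P0 d hd, Jmat_mul_P1 d hd, Matrix.one_mul, Matrix.one_mul,
    Matrix.kronecker_zero, zero_add, hC1A]
  have hJ : Jmat d = (d : ℝ) • P1 d := by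
    rw [P1, smul_smul, mul_inv_cancel₀ hdne, one_smul]
  rw [hJ]
  have hsum : (C1 * B) ⊗ₖ P1 d + (C2 * B) ⊗ₖ ((d:ℝ) • P1 d)
      = (1 : Matrix (Fin k) (Fin k) ℝ) ⊗ₖ P1 d := by
    rw [Matrix.kronecker_smul, ← Matrix.smul_kronecker, ← Matrix.add_kronecker,
      ← smul_mul_assoc, ← Matrix.add_mul, hC12B]
  rw [add_assoc, hsum, ← Matrix.kronecker_add, P0_add_P1, Matrix.one_kronecker_one]
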